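/- Let β ≥ max_{[0,R]} V^+ and |n| ≥ 1. Then for all u ∈ H with ‖u‖_H^2 = 1/(2R^2), the action I_β(u) = (1/2)∫_0^R { r u_r^2 + (n^2/r) u^2 + (β − V) r u^2 − (r/2) u^4 } dr satisfies I_β(u) ≥ 1/(8R^2). -/

import Mathlib

open MeasureTheory Set

/-- The action functional `I_β`. -/
noncomputable def actionIbeta (R : ℝ) (n : ℤ) (V : ℝ → ℝ) (β : ℝ) (u u' : ℝ → ℝ) : ℝ :=
  (1/2) * ∫ r in Ioo (0:ℝ) R,
    (r * u' r ^ 2 + ((n:ℝ)^2 / r) * u r ^ 2 + (β - V r) * r * u r ^ 2 - r / 2 * u r ^ 4)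

/-- mountain-pass lower bound: if `β ≥ max V⁺` and `|n| ≥ 1`, then
`I_β(u) ≥ 1/(8R²)` for all `u ∈ H` with `‖u‖_H² = 1/(2R²)`. -/
theorem stmt13 (R : ℝ) (hR : 0 < R) (n : ℤ) (hn : 1 ≤ |n|)
    (V : ℝ → ℝ) (hV : ContinuousOn V (Icc 0 R)) (β : ℝ)
    (hβ : ∀ r ∈ Icc (0:ℝ) R, max (V r) 0 ≤ β)
    (u u' : ℝ → ℝ)
    (hderiv : ∀ x ∈ Icc (0:ℝ) R, HasDerivAt u (u' x) x)
    (hu0 : u 0 = 0) (huR : u R = 0)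
    (hE1 : IntegrableOn (fun r => r * u' r ^ 2) (Ioo 0 R))
    (hE2 : IntegrableOn (fun r => u r ^ 2 / r) (Ioo 0 R))
    (hnorm : ∫ r in Ioo (0:ℝ) R, (r * u' r ^ 2 + u r ^ 2 / r) = 1 / (2 * R ^ 2)) :
    actionIbeta R n V β u u' ≥ 1 / (8 * R ^ 2) := by
  set g : ℝ → ℝ := fun r => r * u' r ^ 2 + u r ^ 2 / r with hg_def
  have hgInt : IntegrableOn g (Ioo 0 R) := hE1.add hE2
  have hu_cont : ContinuousOn u (Icc 0 R) := fun x hx =>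
    (hderiv x hx).continuousAt.continuousWithinAt
  -- pointwise AM-GM bound on (0, R)
  have hAM : ∀ s ∈ Ioo (0:ℝ) R, ‖2 * u s * u' s‖ ≤ g s := by
    intro s hs
    have hs0 : (0:ℝ) < s := hs.1
    rw [Real.norm_eq_abs, abs_le]
    constructor
    · rw [neg_le, ← sub_nonneg]
      have : g s - -(2 * u s * u' s) = (s * u' s + u s) ^ 2 / s := by
        simp only [hg_def]; field_simp; ring
      rw [this]; positivity
    · rw [← sub_nonneg]
      have : g s - 2 * u s * u' s = (s * u' s - u s) ^ 2 / s := by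
        simp only [hg_def]; field_simp; ring
      rw [this]; positivity
  -- g is nonnegative on (0, R)
  have hg_nonneg : ∀ s ∈ Ioo (0:ℝ) R, 0 ≤ g s := by
    intro s hs
    have hs0 : (0:ℝ) < s := hs.1
    have : 0 ≤ s * u' s ^ 2 := by positivity
    have : 0 ≤ u s ^ 2 / s := by positivity
    simp only [hg_def]; linarith
  -- the sup bound: u(r)² ≤ 1/(2R²) on [0, R]
  have hbound : ∀ r ∈ Icc (0:ℝ) R, u r ^ 2 ≤ 1 / (2 * R ^ 2) := by
    intro r hr
    rcases eq_or_lt_of_le hr.1 with h0 | h0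
    · rw [← h0, hu0]
      norm_num
      positivity
    · -- measurability of 2 u u' on Ioo 0 r
      have hrR : r ≤ R := hr.2
      have hsub : Ioo (0:ℝ) r ⊆ Ioo 0 R := Ioo_subset_Ioo le_rfl hrR
      have hu'_ae : ∀ᵐ s ∂(volume.restrict (Ioo (0:ℝ) r)), deriv u s = u' s := by
        refine (ae_restrict_iff' measurableSet_Ioo).2 (ae_of_all _ fun s hs => ?_)
        exact (hderiv s ⟨le_of_lt hs.1, le_trans (le_of_lt hs.2) hrR⟩).deriv
      have hu_meas : AEStronglyMeasurable u (volume.restrict (Ioo (0:ℝ) r)) :=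
        (hu_cont.mono (hsub.trans Ioo_subset_Icc_self)).aestronglyMeasurable measurableSet_Ioo
      have hu'_meas : AEStronglyMeasurable u' (volume.restrict (Ioo (0:ℝ) r)) :=
        ((measurable_deriv u).aestronglyMeasurable.restrict).congr hu'_ae
      have hmeas : AEStronglyMeasurable (fun s => 2 * u s * u' s)
          (volume.restrict (Ioo (0:ℝ) r)) :=
        (aestronglyMeasurable_const.mul hu_meas).mul hu'_meas
      have hgInt' : IntegrableOn g (Ioo 0 r) := hgInt.mono_set hsub
      have hInt : IntegrableOn (fun s => 2 * u s * u' s) (Ioo 0 r) := by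
        refine Integrable.mono' hgInt' hmeas ?_
        refine (ae_restrict_iff' measurableSet_Ioo).2 (ae_of_all _ fun s hs => ?_)
        exact hAM s (hsub hs)
      have hIntInterval : IntervalIntegrable (fun s => 2 * u s * u' s) volume 0 r := by
        rw [intervalIntegrable_iff_integrableOn_Ioc_of_le (le_of_lt h0),
          integrableOn_Ioc_iff_integrableOn_Ioo]
        exact hInt
      have ftc : ∫ s in (0:ℝ)..r, 2 * u s * u' s = u r ^ 2 - u 0 ^ 2 := by
        have h := intervalIntegral.integral_eq_sub_of_hasDerivAt (f := fun s => u s ^ 2)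
          (f' := fun s => 2 * u s * u' s) (a := 0) (b := r) ?_ hIntInterval
        · simpa using h
        · intro s hs
          have hs' : s ∈ Icc (0:ℝ) R := by
            rw [uIcc_of_le (le_of_lt h0)] at hs
            exact ⟨hs.1, le_trans hs.2 hrR⟩
          have := (hderiv s hs').pow 2
          simp at this; exact this
      have key : u r ^ 2 ≤ ∫ s in Ioo (0:ℝ) R, g s := by
        have h1 : u r ^ 2 = ∫ s in Ioo (0:ℝ) r, 2 * u s * u' s := by
          have h2 : ∫ s in (0:ℝ)..r, 2 * u s * u' s = ∫ s in Ioo (0:ℝ) r, 2 * u s * u' s := by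
            rw [intervalIntegral.integral_of_le (le_of_lt h0),
              MeasureTheory.integral_Ioc_eq_integral_Ioo]
          rw [← h2, ftc, hu0]; ring
        rw [h1]
        calc ∫ s in Ioo (0:ℝ) r, 2 * u s * u' s
            ≤ ∫ s in Ioo (0:ℝ) r, g s := by
              refine setIntegral_mono_on hInt hgInt' measurableSet_Ioo fun s hs => ?_
              exact le_trans (le_abs_self _) (hAM s (hsub hs))
          _ ≤ ∫ s in Ioo (0:ℝ) R, g s := by
              refine setIntegral_mono_set hgInt ?_ (HasSubset.Subset.eventuallyLE hsub)
              exact (ae_restrict_iff' measurableSet_Ioo).2 (ae_of_all _ hg_nonneg)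
      calc u r ^ 2 ≤ ∫ s in Ioo (0:ℝ) R, g s := key
        _ = 1 / (2 * R ^ 2) := hnorm
  -- the integrand of the action
  set f : ℝ → ℝ := fun r =>
    r * u' r ^ 2 + ((n:ℝ)^2 / r) * u r ^ 2 + (β - V r) * r * u r ^ 2 - r / 2 * u r ^ 4
    with hf_def
  have hn2 : (1:ℝ) ≤ (n:ℝ) ^ 2 := by
    have : (1:ℤ) ≤ n ^ 2 := by nlinarith [sq_abs n, hn]
    exact_mod_cast this
  -- integrability of f
  have hfInt : IntegrableOn f (Ioo 0 R) := by
    have h2 : IntegrableOn (fun r => ((n:ℝ)^2 / r) * u r ^ 2) (Ioo 0 R) := by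
      have heq : (fun r => ((n:ℝ)^2 / r) * u r ^ 2) = fun r => (n:ℝ)^2 * (u r ^ 2 / r) := by
        funext x; ring
      rw [heq]; exact hE2.const_mul _
    have h3 : IntegrableOn (fun r => (β - V r) * r * u r ^ 2) (Ioo 0 R) := by
      have hc : ContinuousOn (fun r => (β - V r) * r * u r ^ 2) (Icc 0 R) :=
        ((continuousOn_const.sub hV).mul continuousOn_id).mul (hu_cont.pow 2)
      exact (hc.integrableOn_Icc).mono_set Ioo_subset_Icc_self
    have h4 : IntegrableOn (fun r => r / 2 * u r ^ 4) (Ioo 0 R) := by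
      have hc : ContinuousOn (fun r => r / 2 * u r ^ 4) (Icc 0 R) :=
        (continuousOn_id.div_const 2).mul (hu_cont.pow 4)
      exact (hc.integrableOn_Icc).mono_set Ioo_subset_Icc_self
    exact ((hE1.add h2).add h3).sub h4
  -- pointwise bound: (3/4) g ≤ f on (0, R)
  have hpt : ∀ x ∈ Ioo (0:ℝ) R, 3/4 * g x ≤ f x := by
    intro x hx
    have hx0 : (0:ℝ) < x := hx.1
    have hxR : x < R := hx.2
    have hb : u x ^ 2 ≤ 1 / (2 * R ^ 2) := hbound x ⟨le_of_lt hx0, le_of_lt hxR⟩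
    have h1 : u x ^ 2 / x ≤ ((n:ℝ)^2 / x) * u x ^ 2 := by
      have : ((n:ℝ)^2 / x) * u x ^ 2 = (n:ℝ)^2 * u x ^ 2 / x := by ring
      rw [this, div_le_div_iff_of_pos_right hx0]
      nlinarith [sq_nonneg (u x)]
    have h2 : 0 ≤ (β - V x) * x * u x ^ 2 := by
      have hVx : V x ≤ β := le_trans (le_max_left _ _) (hβ x ⟨le_of_lt hx0, le_of_lt hxR⟩)
      have : 0 ≤ β - V x := by linarith
      positivity
    have h3 : x / 2 * u x ^ 4 ≤ 1/4 * (u x ^ 2 / x) := by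
      have hx2 : x ^ 2 ≤ R ^ 2 := by nlinarith
      have step1 : x / 2 * u x ^ 4 ≤ x / 2 * (1 / (2 * R ^ 2)) * u x ^ 2 := by
        have : x / 2 * u x ^ 4 = x / 2 * u x ^ 2 * u x ^ 2 := by ring
        rw [this]
        have h5 : x / 2 * u x ^ 2 ≤ x / 2 * (1 / (2 * R ^ 2)) := by
          have := mul_le_mul_of_nonneg_left hb (by positivity : (0:ℝ) ≤ x / 2)
          linarith
        nlinarith [sq_nonneg (u x)]
      have step2 : x / 2 * (1 / (2 * R ^ 2)) ≤ 1/4 * (1 / x) := by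
        have e1 : x / 2 * (1 / (2 * R ^ 2)) = x / (4 * R ^ 2) := by ring
        have e2 : (1:ℝ)/4 * (1 / x) = 1 / (4 * x) := by ring
        rw [e1, e2, div_le_div_iff₀ (by positivity) (by positivity)]
        nlinarith
      calc x / 2 * u x ^ 4 ≤ x / 2 * (1 / (2 * R ^ 2)) * u x ^ 2 := step1
        _ ≤ 1/4 * (1 / x) * u x ^ 2 := by nlinarith [sq_nonneg (u x)]
        _ = 1/4 * (u x ^ 2 / x) := by ring
    have h4 : 0 ≤ x * u' x ^ 2 := by positivity
    simp only [hf_def, hg_def]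
    linarith
  -- integrate
  have hmain : 3/4 * (1 / (2 * R ^ 2)) ≤ ∫ x in Ioo (0:ℝ) R, f x := by
    calc 3/4 * (1 / (2 * R ^ 2)) = ∫ x in Ioo (0:ℝ) R, 3/4 * g x := by
          rw [MeasureTheory.integral_const_mul, hnorm]
      _ ≤ ∫ x in Ioo (0:ℝ) R, f x :=
          setIntegral_mono_on (hgInt.const_mul _) hfInt measurableSet_Ioo hpt
  have : actionIbeta R n V β u u' = 1/2 * ∫ x in Ioo (0:ℝ) R, f x := rfl
  rw [this, ge_iff_le]
  have hfinal : 1 / (8 * R ^ 2) ≤ 1/2 * (3/4 * (1 / (2 * R ^ 2))) := by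
    have e : (1:ℝ)/2 * (3/4 * (1 / (2 * R ^ 2))) = 3 / (16 * R ^ 2) := by ring
    rw [e, div_le_div_iff₀ (by positivity) (by positivity)]
    nlinarith [sq_nonneg R]
  calc 1 / (8 * R ^ 2) ≤ 1/2 * (3/4 * (1 / (2 * R ^ 2))) := hfinal
    _ ≤ 1/2 * ∫ x in Ioo (0:ℝ) R, f x := by linarith
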